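/- The position matrix m_{i,j} = (C(i-1,j-1) + C(i-1,n-j))/2^i is doubly stochastic: for each fixed i, the sum over j from 1 to n of m_{i,j} equals 1, and for each fixed j, the sum over i from 1 to n of m_{i,j} equals 1. -/

import Mathlib

open Finset

/-- Pascal recurrence for partial row sums of binomial coefficients. -/
lemma pascal_partial_sum (N r : ℕ) :
    ∑ s ∈ range (r + 1), Nat.choose (N + 2) s + Nat.choose (N + 1) r
      = 2 * ∑ s ∈ range (r + 1), Nat.choose (N + 1) s := by
  induction r with
  | zero => simp
  | succ r ih =>
    rw [sum_range_succ, sum_range_succ (f := fun s => Nat.choose (N + 1) s),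
      Nat.choose_succ_succ (N + 1) r]
    simp only [Nat.succ_eq_add_one] at *
    omega

/-- Sums over `range n` of `choose d` with `d < n` give the full row sum. -/
lemma sum_range_choose_of_lt {d n : ℕ} (h : d < n) :
    ∑ k ∈ range n, Nat.choose d k = 2 ^ d := by
  rw [← Nat.sum_range_choose d]
  symm
  apply Finset.sum_subset
  · exact Finset.range_subset_range.2 h
  · intro x _ hx
    simp only [mem_range, not_lt] at hx
    exact Nat.choose_eq_zero_of_lt (by omega)

/-- Partial sum of the negative binomial series at `1/2`. -/
lemma neg_binom_partial (r : ℕ) : ∀ N : ℕ,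
    ∑ k ∈ range (N + 1), (Nat.choose k r : ℝ) / 2 ^ (k + 1)
      = 1 - (∑ s ∈ range (r + 1), (Nat.choose (N + 1) s : ℝ)) / 2 ^ (N + 1) := by
  intro N
  induction N with
  | zero =>
    rcases Nat.eq_zero_or_pos r with hr | hr
    · subst hr; norm_num
    · have h0 : Nat.choose 0 r = 0 := Nat.choose_eq_zero_of_lt hr
      have h1 : ∑ s ∈ range (r + 1), Nat.choose 1 s = 2 := by
        have := sum_range_choose_of_lt (d := 1) (n := r + 1) (by omega)
        simpa using this
      have h1' : ∑ s ∈ range (r + 1), (Nat.choose 1 s : ℝ) = 2 := by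
        rw [← Nat.cast_sum, h1]; norm_num
      simp [h0, h1']
  | succ N ih =>
    rw [sum_range_succ, ih]
    have hB := pascal_partial_sum N r
    have hB' : ∑ s ∈ range (r + 1), (Nat.choose (N + 2) s : ℝ)
        = 2 * ∑ s ∈ range (r + 1), (Nat.choose (N + 1) s : ℝ) - Nat.choose (N + 1) r := by
      have := congrArg (fun x : ℕ => (x : ℝ)) hB
      push_cast at this
      linarith
    rw [show N + 1 + 1 = N + 2 from rfl, hB']
    have h2 : (2 : ℝ) ^ (N + 2) = 2 * 2 ^ (N + 1) := by ring
    field_simp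
    ring

/-- The two tail sums of a binomial row combine to the full row sum. -/
lemma split_sum_choose {n j : ℕ} (h1 : 1 ≤ j) (h2 : j ≤ n) :
    ∑ s ∈ range j, Nat.choose n s + ∑ s ∈ range (n - j + 1), Nat.choose n s = 2 ^ n := by
  have hrefl : ∑ s ∈ range (n - j + 1), Nat.choose n s
      = ∑ s ∈ range (n - j + 1), Nat.choose n (j + s) := by
    rw [← Finset.sum_range_reflect (fun t => Nat.choose n (j + t)) (n - j + 1)]
    apply Finset.sum_congr rfl
    intro s hs
    simp only [mem_range] at hs
    have : j + (n - j + 1 - 1 - s) = n - s := by omega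
    rw [this]
    exact (Nat.choose_symm (by omega)).symm
  rw [hrefl, ← Finset.sum_range_add (fun s => Nat.choose n s) j (n - j + 1),
    show j + (n - j + 1) = n + 1 by omega, Nat.sum_range_choose]

theorem shelf_position_matrix_doubly_stochastic (n : ℕ) (hn : 1 ≤ n)
    (m : ℕ → ℕ → ℝ)
    (hm : ∀ i j, m i j = ((Nat.choose (i - 1) (j - 1) : ℝ) + Nat.choose (i - 1) (n - j)) / 2 ^ i) :
    (∀ i, 1 ≤ i → i ≤ n → ∑ j ∈ Finset.Icc 1 n, m i j = 1) ∧
    (∀ j, 1 ≤ j → j ≤ n → ∑ i ∈ Finset.Icc 1 n, m i j = 1) := by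
  have hIcc : Finset.Icc 1 n = Finset.Ico 1 (n + 1) := by
    ext x; simp [Nat.lt_succ_iff]
  constructor
  · intro i hi1 hin
    simp only [hm]
    rw [hIcc, Finset.sum_Ico_eq_sum_range]
    simp only [show n + 1 - 1 = n from rfl]
    have e1 : ∀ k, 1 + k - 1 = k := fun k => by omega
    have key : ∑ k ∈ range n,
        ((Nat.choose (i - 1) (1 + k - 1) : ℝ) + Nat.choose (i - 1) (n - (1 + k))) / 2 ^ i
        = (∑ k ∈ range n, (Nat.choose (i - 1) k : ℝ)
          + ∑ k ∈ range n, (Nat.choose (i - 1) (n - 1 - k) : ℝ)) / 2 ^ i := by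
      rw [← Finset.sum_add_distrib, ← Finset.sum_div]
      apply congrArg (· / (2:ℝ) ^ i)
      apply Finset.sum_congr rfl
      intro k hk
      simp only [mem_range] at hk
      rw [e1, show n - (1 + k) = n - 1 - k from by omega]
    rw [key, Finset.sum_range_reflect (fun k => (Nat.choose (i - 1) k : ℝ)) n]
    have hs : ∑ k ∈ range n, (Nat.choose (i - 1) k : ℝ) = 2 ^ (i - 1) := by
      rw [← Nat.cast_sum, sum_range_choose_of_lt (by omega)]
      push_cast
      ring
    rw [hs]
    have hi2 : (2 : ℝ) ^ i = 2 ^ (i - 1) * 2 := by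
      rw [← pow_succ]
      congr 1
      omega
    rw [hi2]
    have : (0:ℝ) < 2 ^ (i - 1) := by positivity
    field_simp
    ring
  · intro j hj1 hjn
    simp only [hm]
    rw [hIcc, Finset.sum_Ico_eq_sum_range]
    simp only [show n + 1 - 1 = n from rfl]
    have key : ∑ k ∈ range n,
        ((Nat.choose (1 + k - 1) (j - 1) : ℝ) + Nat.choose (1 + k - 1) (n - j)) / 2 ^ (1 + k)
        = ∑ k ∈ range n, (Nat.choose k (j - 1) : ℝ) / 2 ^ (k + 1)
          + ∑ k ∈ range n, (Nat.choose k (n - j) : ℝ) / 2 ^ (k + 1) := by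
      rw [← Finset.sum_add_distrib]
      apply Finset.sum_congr rfl
      intro k hk
      rw [show 1 + k - 1 = k from by omega, show 1 + k = k + 1 from by omega, add_div]
    rw [key]
    obtain ⟨N, hN⟩ : ∃ N, n = N + 1 := ⟨n - 1, by omega⟩
    subst hN
    rw [neg_binom_partial (j - 1) N, neg_binom_partial (N + 1 - j) N]
    have hsplit := split_sum_choose (n := N + 1) (j := j) hj1 hjn
    rw [show j - 1 + 1 = j from by omega] at *
    have hsplit' : ∑ s ∈ range j, (Nat.choose (N + 1) s : ℝ)
        + ∑ s ∈ range (N + 1 - j + 1), (Nat.choose (N + 1) s : ℝ) = 2 ^ (N + 1) := by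
      rw [← Nat.cast_sum, ← Nat.cast_sum, ← Nat.cast_add, hsplit]
      push_cast
      ring
    have hp : (0:ℝ) < 2 ^ (N + 1) := by positivity
    field_simp
    linarith [hsplit']
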